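/- arXiv:2204.06793 — 2 statements merged into one kernel-verified Lean document; each statement's English description precedes it below -/
import Mathlib

section
/- Let ν be a unimodal Lévy density (radial with almost decreasing profile: there exists c ≥ 1 such that ν(r) ≤ c ν(s) whenever 0 < s ≤ r) and let Ω ⊂ ℝ^d be open, bounded, with Ω ⊂ B_{R/2}(0) for some R ≥ 1 with ν(R) ≠ 0. If a measurable function u : ℝ^d → ℝ satisfies E(u,u) = (1/2)∬_{(Ω^c×Ω^c)^c}(u(x)−u(y))² ν(x−y) dx dy < ∞, then u|_Ω ∈ L²(Ω). -/
open MeasureTheory Set Metric ENNReal NNReal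

/-- for a unimodal Lévy density and a bounded open `Ω ⊆ B_{R/2}(0)`
with `ν(R) ≠ 0`, finiteness of the energy `E(u,u)` implies `u|_Ω ∈ L²(Ω)`. -/
theorem finite_energy_implies_L2_on_Omega
    (d : ℕ) (Ω : Set (EuclideanSpace ℝ (Fin d)))
    (hΩo : IsOpen Ω) (hΩb : Bornology.IsBounded Ω)
    (R : ℝ) (hR : 1 ≤ R) (hΩR : Ω ⊆ ball 0 (R / 2))
    (f : ℝ → ℝ≥0∞) (ν : EuclideanSpace ℝ (Fin d) → ℝ≥0∞)
    (hmeas : Measurable ν) (hrad : ∀ h, ν h = f ‖h‖)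
    (c : ℝ≥0) (hc : 1 ≤ c)
    (hmono : ∀ s r : ℝ, 0 < s → s ≤ r → f r ≤ (c : ℝ≥0∞) * f s)
    (hlevy : ∫⁻ h, ENNReal.ofReal (min 1 (‖h‖ ^ 2)) * ν h < ⊤)
    (hfR : f R ≠ 0)
    (u : EuclideanSpace ℝ (Fin d) → ℝ) (hu : Measurable u)
    (hE : ∫⁻ p in (Ωᶜ ×ˢ Ωᶜ)ᶜ, ENNReal.ofReal ((u p.1 - u p.2) ^ 2) * ν (p.1 - p.2)
        ∂(volume.prod volume) < ⊤) :
    MemLp u 2 (volume.restrict Ω) := by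
  haveI : IsFiniteMeasure (volume.restrict Ω) :=
    ⟨by rw [Measure.restrict_apply_univ]; exact hΩb.measure_lt_top⟩
  rcases Nat.eq_zero_or_pos d with hd | hd
  · subst hd
    have hconst : u = fun _ => u 0 := funext fun x => congrArg u (Subsingleton.elim _ _)
    rw [hconst]
    exact memLp_const _
  haveI : Nonempty (Fin d) := ⟨⟨0, hd⟩⟩
  rcases Set.eq_empty_or_nonempty Ω with hΩe | hne
  · rw [hΩe, Measure.restrict_empty]
    exact ⟨hu.aestronglyMeasurable, by simp⟩
  have hmeasΩ : MeasurableSet Ω := hΩo.measurableSet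
  have hq : Measurable fun p : EuclideanSpace ℝ (Fin d) × EuclideanSpace ℝ (Fin d) => ENNReal.ofReal ((u p.1 - u p.2) ^ 2) :=
    (((hu.comp measurable_fst).sub (hu.comp measurable_snd)).pow_const 2).ennreal_ofReal
  -- the diagonal is a null set
  have hdiag : (volume.prod volume) {p : EuclideanSpace ℝ (Fin d) × EuclideanSpace ℝ (Fin d) | p.1 = p.2} = 0 := by
    have hm : MeasurableSet {p : EuclideanSpace ℝ (Fin d) × EuclideanSpace ℝ (Fin d) | p.1 = p.2} :=
      (isClosed_diagonal : IsClosed (Set.diagonal (EuclideanSpace ℝ (Fin d)))).measurableSet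
    rw [Measure.prod_apply hm]
    have hsec : ∀ x : EuclideanSpace ℝ (Fin d), Prod.mk x ⁻¹' {p : EuclideanSpace ℝ (Fin d) × EuclideanSpace ℝ (Fin d) | p.1 = p.2} = {x} := by
      intro x; ext y; simp [eq_comm]
    simp [hsec]
  -- lower bound on ν on Ω × Ω
  have hnu : ∀ᵐ p ∂((volume.prod volume).restrict (Ω ×ˢ Ω)),
      (f R / c) ≤ ν (p.1 - p.2) := by
    have h1 : ∀ᵐ p ∂((volume.prod volume).restrict (Ω ×ˢ Ω)), p ∈ Ω ×ˢ Ω :=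
      ae_restrict_mem (hmeasΩ.prod hmeasΩ)
    have h2 : ∀ᵐ p : EuclideanSpace ℝ (Fin d) × EuclideanSpace ℝ (Fin d) ∂((volume.prod volume).restrict (Ω ×ˢ Ω)), p.1 ≠ p.2 := by
      refine ae_restrict_of_ae ?_
      rw [ae_iff]
      convert hdiag using 2
      ext p; simp
    filter_upwards [h1, h2] with p hp hpne
    have hx : ‖p.1‖ < R / 2 := mem_ball_zero_iff.1 (hΩR hp.1)
    have hy : ‖p.2‖ < R / 2 := mem_ball_zero_iff.1 (hΩR hp.2)
    have h0 : 0 < ‖p.1 - p.2‖ := by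
      rw [norm_pos_iff]; exact sub_ne_zero.2 hpne
    have hle : ‖p.1 - p.2‖ ≤ R := by
      calc ‖p.1 - p.2‖ ≤ ‖p.1‖ + ‖p.2‖ := norm_sub_le _ _
        _ ≤ R := by linarith
    have := hmono _ R h0 hle
    rw [hrad]
    exact ENNReal.div_le_of_le_mul' this
  -- finiteness of the energy on Ω × Ω
  have key : (f R / c) *
      (∫⁻ p in Ω ×ˢ Ω, ENNReal.ofReal ((u p.1 - u p.2) ^ 2) ∂(volume.prod volume)) < ⊤ := by
    rw [← lintegral_const_mul _ hq]
    calc ∫⁻ p in Ω ×ˢ Ω, (f R / c) * ENNReal.ofReal ((u p.1 - u p.2) ^ 2)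
          ∂(volume.prod volume)
        ≤ ∫⁻ p in Ω ×ˢ Ω, ENNReal.ofReal ((u p.1 - u p.2) ^ 2) * ν (p.1 - p.2)
          ∂(volume.prod volume) := by
          refine lintegral_mono_ae ?_
          filter_upwards [hnu] with p hp
          rw [mul_comm]
          exact mul_le_mul_right hp _
      _ ≤ ∫⁻ p in (Ωᶜ ×ˢ Ωᶜ)ᶜ, ENNReal.ofReal ((u p.1 - u p.2) ^ 2) * ν (p.1 - p.2)
          ∂(volume.prod volume) := by
          refine lintegral_mono_set ?_
          intro p hp h
          exact h.1 hp.1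
      _ < ⊤ := hE
  have hfrc : (f R / c : ℝ≥0∞) ≠ 0 := (ENNReal.div_pos hfR (by simp)).ne'
  have hI : (∫⁻ p in Ω ×ˢ Ω, ENNReal.ofReal ((u p.1 - u p.2) ^ 2)
      ∂(volume.prod volume)) < ⊤ := by
    by_contra h
    rw [not_lt, top_le_iff] at h
    rw [h, ENNReal.mul_top hfrc] at key
    exact key.ne rfl
  -- Fubini: for a.e. x, the slice integral is finite
  have hI2 : ∫⁻ x in Ω, ∫⁻ y in Ω, ENNReal.ofReal ((u x - u y) ^ 2) < ⊤ := by
    rw [← lintegral_prod _ hq.aemeasurable]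
    rwa [Measure.prod_restrict]
  have hae : ∀ᵐ x ∂(volume.restrict Ω),
      (∫⁻ y in Ω, ENNReal.ofReal ((u x - u y) ^ 2)) < ⊤ :=
    ae_lt_top hq.lintegral_prod_right' hI2.ne
  have hrne : volume.restrict Ω ≠ 0 := by
    rw [Ne, Measure.restrict_eq_zero]
    exact (hΩo.measure_pos volume hne).ne'
  haveI : (ae (volume.restrict Ω)).NeBot := ae_neBot.2 hrne
  obtain ⟨x₀, hx₀⟩ := hae.exists
  -- conclude
  have hmem : MemLp (fun y => u y - u x₀) 2 (volume.restrict Ω) := by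
    rw [memLp_two_iff_integrable_sq (f := fun y => u y - u x₀) (μ := volume.restrict Ω)
      ((hu.sub measurable_const).aestronglyMeasurable)]
    refine ⟨((hu.sub measurable_const).pow_const 2).aestronglyMeasurable, ?_⟩
    rw [hasFiniteIntegral_iff_ofReal (ae_of_all _ fun y => sq_nonneg _)]
    have hsym : ∀ y, ((u y - u x₀) ^ 2 : ℝ) = (u x₀ - u y) ^ 2 := fun y => by ring
    simpa [hsym] using hx₀
  have h2 := hmem.add (memLp_const (u x₀) : MemLp (fun _ => u x₀) 2 (volume.restrict Ω))
  have heq : u = ((fun y => u y - u x₀) + fun _ => u x₀) := by ext y; simp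
  rw [heq]; exact h2
end

section
/- Let Ω ⊂ ℝ^d be open, bounded, and connected with Lipschitz boundary, and let ν(h) = |h|^{−d−α} for fixed α ∈ (0,2), with weight ν̃(h) ≍ (1+|h|)^{−d−α}. Take Ω = B₁(0). Then there exists g ∈ L¹(B₁^c) \ L²(B₁^c, ν̃⁻¹) with ∫_{B₁^c} g = 0 such that the Neumann problem Lu = 0 in B₁, Nu = g on ℝ^d \ B₁ has no weak solution u ∈ V_ν(B₁|ℝ^d); explicitly one may take g = g_γ ν̃ with g_γ(x) = (x₁/|x|)(|x|−1)^γ 1_{B₁^c}(x) for suitable γ. -/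
open MeasureTheory Set Metric ENNReal Pointwise

noncomputable section NXAux

namespace NX

variable {d : ℕ}

/-- coordinate function is measurable -/
lemma meas_coord (i : Fin d) : Measurable fun x : EuclideanSpace ℝ (Fin d) => x i :=
  (EuclideanSpace.proj (𝕜 := ℝ) i).continuous.measurable

lemma cont_coord (i : Fin d) : Continuous fun x : EuclideanSpace ℝ (Fin d) => x i :=
  (EuclideanSpace.proj (𝕜 := ℝ) i).continuous

lemma abs_coord_le (i : Fin d) (x : EuclideanSpace ℝ (Fin d)) : |x i| ≤ ‖x‖ := by
  rw [EuclideanSpace.norm_eq]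
  have h1 : |x i| = Real.sqrt (‖x i‖ ^ 2) := by
    rw [Real.sqrt_sq_eq_abs]; simp [Real.norm_eq_abs, abs_abs]
  rw [h1]
  apply Real.sqrt_le_sqrt
  exact Finset.single_le_sum (f := fun j => ‖x j‖ ^ 2)
    (fun j _ => by positivity) (Finset.mem_univ i)

/-- the boundary datum -/
def gfun (d : ℕ) (i : Fin d) (α : ℝ) (x : EuclideanSpace ℝ (Fin d)) : ℝ :=
  if ‖x‖ ≤ 1 then 0
  else (x i / ‖x‖) * (‖x‖ - 1) ^ (3 * α / 4) * (1 + ‖x‖) ^ (-(d : ℝ) - α)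

/-- the truncated test function -/
def vfun (d : ℕ) (i : Fin d) (α R : ℝ) (x : EuclideanSpace ℝ (Fin d)) : ℝ :=
  if 2 ≤ ‖x‖ ∧ ‖x‖ ≤ R then (x i / ‖x‖) * (‖x‖ - 1) ^ (α / 4) else 0

/-- the core integrand driving divergences -/
def core (d : ℕ) (i : Fin d) (α : ℝ) (x : EuclideanSpace ℝ (Fin d)) : ℝ :=
  (x i / ‖x‖) ^ 2 * (‖x‖ - 1) ^ α * (1 + ‖x‖) ^ (-(d : ℝ) - α)

/-- base cell for scaling -/
def W (d : ℕ) (i : Fin d) : Set (EuclideanSpace ℝ (Fin d)) :=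
  {x | 1 ≤ ‖x‖ ∧ ‖x‖ < 2 ∧ ‖x‖ ≤ 2 * |x i|}

/-- dyadic annular cones -/
def U (d : ℕ) (i : Fin d) (n : ℕ) : Set (EuclideanSpace ℝ (Fin d)) :=
  {x | (2:ℝ) ^ ((n:ℝ) + 1) ≤ ‖x‖ ∧ ‖x‖ < (2:ℝ) ^ ((n:ℝ) + 2) ∧ ‖x‖ ≤ 2 * |x i|}

def aconst (d : ℕ) (α : ℝ) (n : ℕ) : ℝ :=
  (1/4) * ((2:ℝ) ^ (n:ℝ)) ^ α * ((2:ℝ) ^ ((n:ℝ) + 3)) ^ (-(d:ℝ) - α)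

def c0 (d : ℕ) (i : Fin d) (α : ℝ) : ℝ≥0∞ :=
  ENNReal.ofReal ((1/4) * (2:ℝ) ^ (-2*(d:ℝ) - 3*α)) * volume (W d i)

lemma measurableSet_U (i : Fin d) (n : ℕ) : MeasurableSet (U d i n) := by
  have h1 : MeasurableSet {x : EuclideanSpace ℝ (Fin d) | (2:ℝ) ^ ((n:ℝ)+1) ≤ ‖x‖} :=
    measurableSet_le measurable_const measurable_norm
  have h2 : MeasurableSet {x : EuclideanSpace ℝ (Fin d) | ‖x‖ < (2:ℝ) ^ ((n:ℝ)+2)} :=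
    measurableSet_lt measurable_norm measurable_const
  have h3 : MeasurableSet {x : EuclideanSpace ℝ (Fin d) | ‖x‖ ≤ 2 * |x i|} :=
    measurableSet_le measurable_norm ((meas_coord i).abs.const_mul 2)
  exact (h1.inter (h2.inter h3))

lemma U_disj (i : Fin d) : Pairwise (Function.onFun Disjoint (U d i)) := by
  have key : ∀ m n : ℕ, m < n → Disjoint (U d i m) (U d i n) := by
    intro m n hmn
    rw [Set.disjoint_left]
    rintro x ⟨_, hx2, _⟩ ⟨hy1, _, _⟩
    have h1 : (2:ℝ) ^ ((m:ℝ) + 2) ≤ (2:ℝ) ^ ((n:ℝ) + 1) := by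
      apply Real.rpow_le_rpow_of_exponent_le one_le_two
      have : (m:ℝ) + 1 ≤ (n:ℝ) := by exact_mod_cast hmn
      linarith
    linarith
  intro m n hmn
  rcases lt_or_gt_of_ne hmn with h | h
  · exact key m n h
  · exact (key n m h).symm

lemma two_le_of_mem_U {i : Fin d} {n : ℕ} {x : EuclideanSpace ℝ (Fin d)}
    (hx : x ∈ U d i n) : 2 ≤ ‖x‖ := by
  have h1 : (2:ℝ) ^ (1:ℝ) ≤ (2:ℝ) ^ ((n:ℝ) + 1) := by
    apply Real.rpow_le_rpow_of_exponent_le one_le_two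
    have : (0:ℝ) ≤ (n:ℝ) := Nat.cast_nonneg n
    linarith
  rw [Real.rpow_one] at h1
  exact h1.trans hx.1

lemma U_subset_ball_compl (i : Fin d) (n : ℕ) :
    U d i n ⊆ (ball (0 : EuclideanSpace ℝ (Fin d)) 1)ᶜ := by
  intro x hx
  simp only [mem_compl_iff, mem_ball, dist_zero_right, not_lt]
  have := two_le_of_mem_U hx
  linarith

lemma U_eq_smul (i : Fin d) (n : ℕ) :
    U d i n = ((2:ℝ) ^ ((n:ℝ) + 1)) • W d i := by
  have hc : (0:ℝ) < (2:ℝ) ^ ((n:ℝ) + 1) := Real.rpow_pos_of_pos two_pos _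
  have hc2 : (2:ℝ) ^ ((n:ℝ) + 2) = (2:ℝ) ^ ((n:ℝ) + 1) * 2 := by
    rw [show ((n:ℝ) + 2) = ((n:ℝ) + 1) + 1 by ring, Real.rpow_add two_pos, Real.rpow_one]
  ext x
  rw [Set.mem_smul_set_iff_inv_smul_mem₀ hc.ne']
  set c := (2:ℝ) ^ ((n:ℝ) + 1) with hcdef
  have hnorm : ‖c⁻¹ • x‖ = c⁻¹ * ‖x‖ := by
    rw [norm_smul, Real.norm_eq_abs, abs_inv, abs_of_pos hc]
  have hcoord : |(c⁻¹ • x) i| = c⁻¹ * |x i| := by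
    have h : (c⁻¹ • x) i = c⁻¹ * x i := rfl
    rw [h, abs_mul, abs_inv, abs_of_pos hc]
  show _ ↔ (c⁻¹ • x) ∈ W d i
  unfold W U
  simp only [Set.mem_setOf_eq, hnorm, hcoord]
  rw [one_le_inv_mul₀ hc, inv_mul_lt_iff₀ hc, inv_mul_le_iff₀ hc, hc2]
  have harr : c * (2 * (c⁻¹ * |x i|)) = 2 * |x i| := by
    field_simp
  rw [harr]

lemma volume_U (i : Fin d) (n : ℕ) :
    volume (U d i n) = ENNReal.ofReal (((2:ℝ) ^ ((n:ℝ) + 1)) ^ (d:ℕ)) * volume (W d i) := by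
  rw [U_eq_smul i n, Measure.addHaar_smul_of_nonneg volume (by positivity) (W d i),
    finrank_euclideanSpace_fin]

lemma volume_W_pos (i : Fin d) : 0 < volume (W d i) := by
  have hsub : {x : EuclideanSpace ℝ (Fin d) | 1 < ‖x‖ ∧ ‖x‖ < 2 ∧ ‖x‖ < 2 * x i}
      ⊆ W d i := by
    rintro x ⟨h1, h2, h3⟩
    exact ⟨h1.le, h2, h3.le.trans (by
      have := le_abs_self (x i); nlinarith)⟩
  have hopen : IsOpen {x : EuclideanSpace ℝ (Fin d) | 1 < ‖x‖ ∧ ‖x‖ < 2 ∧ ‖x‖ < 2 * x i} := by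
    refine (isOpen_lt continuous_const continuous_norm).inter
      ((isOpen_lt continuous_norm continuous_const).inter
        (isOpen_lt continuous_norm (continuous_const.mul (cont_coord i))))
  have hne : (EuclideanSpace.single i ((3:ℝ)/2)) ∈
      {x : EuclideanSpace ℝ (Fin d) | 1 < ‖x‖ ∧ ‖x‖ < 2 ∧ ‖x‖ < 2 * x i} := by
    have hn : ‖EuclideanSpace.single i ((3:ℝ)/2)‖ = 3/2 := by
      rw [EuclideanSpace.norm_single, Real.norm_eq_abs]; norm_num
    have hcoordv : (EuclideanSpace.single i ((3:ℝ)/2)) i = 3/2 := by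
      rw [EuclideanSpace.single_apply]; simp
    refine ⟨by rw [hn]; norm_num, by rw [hn]; norm_num, by rw [hn, hcoordv]; norm_num⟩
  calc (0:ℝ≥0∞) < volume {x : EuclideanSpace ℝ (Fin d) | 1 < ‖x‖ ∧ ‖x‖ < 2 ∧ ‖x‖ < 2 * x i} :=
        hopen.measure_pos volume ⟨_, hne⟩
    _ ≤ volume (W d i) := measure_mono hsub

lemma volume_W_lt_top (i : Fin d) : volume (W d i) < ⊤ := by
  have hsub : W d i ⊆ ball (0 : EuclideanSpace ℝ (Fin d)) 2 := by
    rintro x ⟨-, h2, -⟩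
    rwa [mem_ball, dist_zero_right]
  exact lt_of_le_of_lt (measure_mono hsub) measure_ball_lt_top

lemma aconst_nonneg (d n : ℕ) (α : ℝ) : 0 ≤ aconst d α n := by
  unfold aconst; positivity

lemma aconst_mul (n : ℕ) (α : ℝ) :
    aconst d α n * ((2:ℝ) ^ ((n:ℝ) + 1)) ^ (d:ℕ) =
      (1/4) * (2:ℝ) ^ (-2*(d:ℝ) - 3*α) := by
  unfold aconst
  rw [← Real.rpow_natCast ((2:ℝ) ^ ((n:ℝ) + 1)) d,
    ← Real.rpow_mul (by norm_num : (0:ℝ) ≤ 2),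
    ← Real.rpow_mul (by norm_num : (0:ℝ) ≤ 2),
    ← Real.rpow_mul (by norm_num : (0:ℝ) ≤ 2),
    mul_assoc, mul_assoc, ← Real.rpow_add two_pos, ← Real.rpow_add two_pos]
  rw [show (n:ℝ) * α + (((n:ℝ) + 3) * (-(d:ℝ) - α) + ((n:ℝ) + 1) * (d:ℕ)) =
    -2*(d:ℝ) - 3*α by ring]

lemma c0_ne_zero (i : Fin d) (α : ℝ) : c0 d i α ≠ 0 := by
  unfold c0
  apply mul_ne_zero
  · simp only [ne_eq, ENNReal.ofReal_eq_zero, not_le]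
    positivity
  · exact (volume_W_pos i).ne'

lemma c0_ne_top (i : Fin d) (α : ℝ) : c0 d i α ≠ ⊤ :=
  ENNReal.mul_ne_top ENNReal.ofReal_ne_top (volume_W_lt_top i).ne

/-- one annular piece contributes at least `c0` -/
lemma piece (i : Fin d) (α : ℝ) (F : EuclideanSpace ℝ (Fin d) → ℝ) (n : ℕ)
    (hF : ∀ x ∈ U d i n, aconst d α n ≤ F x) :
    c0 d i α ≤ ∫⁻ x in U d i n, ENNReal.ofReal (F x) := by
  have h1 : (∫⁻ x in U d i n, ENNReal.ofReal (aconst d α n)) ≤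
      ∫⁻ x in U d i n, ENNReal.ofReal (F x) :=
    setLIntegral_mono' (measurableSet_U i n)
      (fun x hx => ENNReal.ofReal_le_ofReal (hF x hx))
  refine le_trans ?_ h1
  rw [setLIntegral_const, volume_U i n, ← mul_assoc,
    ← ENNReal.ofReal_mul (aconst_nonneg d n α), aconst_mul, c0]

/-- lower bound for the core on the annular cones -/
lemma core_lb (i : Fin d) {α : ℝ} (hα0 : 0 < α) (n : ℕ) :
    ∀ x ∈ U d i n, aconst d α n ≤ core d i α x := by
  rintro x ⟨hx1, hx2, hx3⟩
  have h2n : (1:ℝ) ≤ (2:ℝ) ^ (n:ℝ) := by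
    rw [← Real.rpow_zero (2:ℝ)]
    exact Real.rpow_le_rpow_of_exponent_le one_le_two (Nat.cast_nonneg n)
  have hs1 : (2:ℝ) ^ ((n:ℝ) + 1) = (2:ℝ) ^ (n:ℝ) * 2 := by
    rw [Real.rpow_add two_pos, Real.rpow_one]
  have hs2 : (2:ℝ) ^ ((n:ℝ) + 3) = (2:ℝ) ^ ((n:ℝ) + 2) * 2 := by
    rw [show ((n:ℝ) + 3) = ((n:ℝ) + 2) + 1 by ring, Real.rpow_add two_pos, Real.rpow_one]
  have h2n2 : (1:ℝ) ≤ (2:ℝ) ^ ((n:ℝ) + 2) := by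
    rw [← Real.rpow_zero (2:ℝ)]
    exact Real.rpow_le_rpow_of_exponent_le one_le_two (by positivity)
  have hxge : (2:ℝ) ^ (n:ℝ) * 2 ≤ ‖x‖ := by rw [← hs1]; exact hx1
  have hx0 : (0:ℝ) < ‖x‖ := by nlinarith
  have h14 : (1/4 : ℝ) ≤ (x i / ‖x‖) ^ 2 := by
    have hsq : ‖x‖ ^ 2 ≤ 4 * (x i) ^ 2 := by nlinarith [sq_abs (x i), abs_nonneg (x i)]
    rw [div_pow, le_div_iff₀ (by positivity)]
    nlinarith
  have hA : ((2:ℝ) ^ (n:ℝ)) ^ α ≤ (‖x‖ - 1) ^ α :=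
    Real.rpow_le_rpow (by positivity) (by nlinarith) hα0.le
  have hB : ((2:ℝ) ^ ((n:ℝ) + 3)) ^ (-(d:ℝ) - α) ≤ (1 + ‖x‖) ^ (-(d:ℝ) - α) := by
    refine Real.rpow_le_rpow_of_nonpos (by linarith) (by nlinarith) ?_
    have : (0:ℝ) ≤ (d:ℝ) := Nat.cast_nonneg d
    linarith
  have c1 : (0:ℝ) ≤ ((2:ℝ) ^ (n:ℝ)) ^ α := Real.rpow_nonneg (by positivity) _
  have c2 : (0:ℝ) ≤ ((2:ℝ) ^ ((n:ℝ) + 3)) ^ (-(d:ℝ) - α) := Real.rpow_nonneg (by positivity) _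
  have c3 : (0:ℝ) ≤ (‖x‖ - 1) ^ α := Real.rpow_nonneg (by nlinarith) _
  unfold aconst core
  exact mul_le_mul (mul_le_mul h14 hA c1 (by positivity)) hB c2
    (by positivity)

/-- core ≤ weighted square of g, for `2 ≤ ‖x‖` -/
lemma core_le_gsq (i : Fin d) {α : ℝ} (hα0 : 0 < α) {x : EuclideanSpace ℝ (Fin d)}
    (hx : 2 ≤ ‖x‖) :
    core d i α x ≤ (gfun d i α x) ^ 2 * (1 + ‖x‖) ^ ((d:ℝ) + α) := by
  have hb1 : (1:ℝ) ≤ ‖x‖ - 1 := by linarith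
  have hb0 : (0:ℝ) < ‖x‖ - 1 := by linarith
  have hw0 : (0:ℝ) < 1 + ‖x‖ := by linarith
  have e1 : ((‖x‖ - 1) ^ (3*α/4)) ^ (2:ℕ) = (‖x‖ - 1) ^ (3*α/2) := by
    rw [← Real.rpow_natCast ((‖x‖ - 1) ^ (3*α/4)) 2, ← Real.rpow_mul hb0.le]
    congr 1; push_cast; ring
  have e2 : ((1 + ‖x‖) ^ (-(d:ℝ) - α)) ^ (2:ℕ) * (1 + ‖x‖) ^ ((d:ℝ) + α)
      = (1 + ‖x‖) ^ (-(d:ℝ) - α) := by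
    rw [← Real.rpow_natCast ((1 + ‖x‖) ^ (-(d:ℝ) - α)) 2, ← Real.rpow_mul hw0.le,
      ← Real.rpow_add hw0]
    congr 1; push_cast; ring
  have key : (gfun d i α x) ^ 2 * (1 + ‖x‖) ^ ((d:ℝ) + α)
      = (x i / ‖x‖) ^ 2 * (‖x‖ - 1) ^ (3*α/2) * (1 + ‖x‖) ^ (-(d:ℝ) - α) := by
    unfold gfun
    rw [if_neg (by push_neg; linarith)]
    rw [show (x i / ‖x‖ * (‖x‖ - 1) ^ (3 * α / 4) * (1 + ‖x‖) ^ (-(d:ℝ) - α)) ^ 2 *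
        (1 + ‖x‖) ^ ((d:ℝ) + α) =
      (x i / ‖x‖) ^ 2 * ((‖x‖ - 1) ^ (3*α/4)) ^ (2:ℕ) *
        (((1 + ‖x‖) ^ (-(d:ℝ) - α)) ^ (2:ℕ) * (1 + ‖x‖) ^ ((d:ℝ) + α)) by ring,
      e1, e2]
  rw [key]
  unfold core
  have hbb : (‖x‖ - 1) ^ α ≤ (‖x‖ - 1) ^ (3*α/2) :=
    Real.rpow_le_rpow_of_exponent_le hb1 (by linarith)
  refine mul_le_mul_of_nonneg_right
    (mul_le_mul_of_nonneg_left hbb (sq_nonneg _)) (Real.rpow_nonneg hw0.le _)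

/-- g·v equals core on the cones -/
lemma gv_eq_core (i : Fin d) {α : ℝ} {R : ℝ} {n : ℕ} {x : EuclideanSpace ℝ (Fin d)}
    (hx : x ∈ U d i n) (hR : (2:ℝ) ^ ((n:ℝ) + 2) ≤ R) :
    gfun d i α x * vfun d i α R x = core d i α x := by
  have h2 : 2 ≤ ‖x‖ := two_le_of_mem_U hx
  have hb0 : (0:ℝ) < ‖x‖ - 1 := by linarith
  have hxR : ‖x‖ ≤ R := le_trans hx.2.1.le hR
  unfold gfun vfun core
  rw [if_neg (by push_neg; linarith), if_pos ⟨h2, hxR⟩]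
  have hadd : (‖x‖ - 1) ^ (3*α/4) * (‖x‖ - 1) ^ (α/4) = (‖x‖ - 1) ^ α := by
    rw [← Real.rpow_add hb0]
    congr 1; ring
  rw [← hadd]
  ring

lemma g_meas (i : Fin d) (α : ℝ) : Measurable (gfun d i α) := by
  unfold gfun
  refine Measurable.ite (measurableSet_le measurable_norm measurable_const)
    measurable_const ?_
  exact (((meas_coord i).div measurable_norm).mul
    ((measurable_norm.sub measurable_const).pow measurable_const)).mul
    ((measurable_const.add measurable_norm).pow measurable_const)

lemma v_meas (i : Fin d) (α R : ℝ) : Measurable (vfun d i α R) := by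
  unfold vfun
  refine Measurable.ite ((measurableSet_le measurable_const measurable_norm).inter
    (measurableSet_le measurable_norm measurable_const)) ?_ measurable_const
  exact ((meas_coord i).div measurable_norm).mul
    ((measurable_norm.sub measurable_const).pow measurable_const)

lemma g_int (i : Fin d) {α : ℝ} (hα0 : 0 < α) (hα2 : α < 2) :
    Integrable (gfun d i α) := by
  have hnr : (Module.finrank ℝ (EuclideanSpace ℝ (Fin d)) : ℝ) < (d:ℝ) + α/4 := by
    rw [finrank_euclideanSpace_fin]; linarith
  refine (integrable_one_add_norm hnr).mono'
    ((g_meas i α).aestronglyMeasurable) (ae_of_all _ fun x => ?_)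
  rw [Real.norm_eq_abs]
  unfold gfun
  by_cases h1 : ‖x‖ ≤ 1
  · rw [if_pos h1, abs_zero]
    positivity
  · rw [if_neg h1]
    push_neg at h1
    have hx0 : (0:ℝ) < ‖x‖ := by linarith
    have habs : |x i / ‖x‖| ≤ 1 := by
      rw [abs_div, abs_of_pos hx0, div_le_one hx0]
      exact abs_coord_le i x
    have hb : |(‖x‖ - 1) ^ (3*α/4)| ≤ (1 + ‖x‖) ^ (3*α/4) := by
      rw [abs_of_nonneg (Real.rpow_nonneg (by linarith) _)]
      exact Real.rpow_le_rpow (by linarith) (by linarith) (by positivity)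
    have hw : |(1 + ‖x‖) ^ (-(d:ℝ) - α)| = (1 + ‖x‖) ^ (-(d:ℝ) - α) :=
      abs_of_nonneg (Real.rpow_nonneg (by linarith) _)
    calc |x i / ‖x‖ * (‖x‖ - 1) ^ (3 * α / 4) * (1 + ‖x‖) ^ (-(d:ℝ) - α)|
        = |x i / ‖x‖| * |(‖x‖ - 1) ^ (3 * α / 4)| * |(1 + ‖x‖) ^ (-(d:ℝ) - α)| := by
          rw [abs_mul, abs_mul]
      _ ≤ 1 * (1 + ‖x‖) ^ (3*α/4) * (1 + ‖x‖) ^ (-(d:ℝ) - α) := by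
          rw [hw]
          refine mul_le_mul_of_nonneg_right (mul_le_mul habs hb (abs_nonneg _) one_pos.le)
            (Real.rpow_nonneg (by linarith) _)
      _ = (1 + ‖x‖) ^ (-((d:ℝ) + α/4)) := by
          rw [one_mul, ← Real.rpow_add (by linarith : (0:ℝ) < 1 + ‖x‖)]
          congr 1; ring

/-- reflection negating the `i`-th coordinate -/
def negIso (i : Fin d) : EuclideanSpace ℝ (Fin d) ≃ₗᵢ[ℝ] EuclideanSpace ℝ (Fin d) where
  toLinearEquiv := LinearEquiv.ofInvolutive
    { toFun := fun x => WithLp.toLp 2 (fun j => if j = i then -(x j) else x j)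
      map_add' := fun x y => by
        ext j; by_cases h : j = i <;> simp [h, PiLp.add_apply] <;> ring
      map_smul' := fun c x => by
        ext j; by_cases h : j = i <;> simp [h, PiLp.smul_apply, smul_eq_mul] <;> ring }
    (fun x => by ext j; by_cases h : j = i <;> simp [h])
  norm_map' := fun x => by
    rw [EuclideanSpace.norm_eq, EuclideanSpace.norm_eq]
    congr 1
    apply Finset.sum_congr rfl
    intro j _
    by_cases h : j = i <;> simp [h]

lemma negIso_apply (i : Fin d) (x : EuclideanSpace ℝ (Fin d)) (j : Fin d) :
    negIso i x j = if j = i then -(x j) else x j := rfl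

lemma g_neg (i : Fin d) (α : ℝ) (x : EuclideanSpace ℝ (Fin d)) :
    gfun d i α ((negIso i) x) = - gfun d i α x := by
  have hn : ‖(negIso i) x‖ = ‖x‖ := (negIso i).norm_map x
  have hc : ((negIso i) x) i = -(x i) := by rw [negIso_apply]; simp
  unfold gfun
  rw [hn, hc]
  by_cases h1 : ‖x‖ ≤ 1
  · simp [h1]
  · rw [if_neg h1, if_neg h1]; ring

lemma g_int_zero (i : Fin d) (α : ℝ) :
    (∫ x in (ball (0 : EuclideanSpace ℝ (Fin d)) 1)ᶜ, gfun d i α x) = 0 := by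
  have hT : MeasurePreserving (⇑(negIso i)) volume volume := (negIso i).measurePreserving
  have hpre : (⇑(negIso i)) ⁻¹' ((ball (0 : EuclideanSpace ℝ (Fin d)) 1)ᶜ)
      = (ball (0 : EuclideanSpace ℝ (Fin d)) 1)ᶜ := by
    ext x
    simp only [mem_preimage, mem_compl_iff, mem_ball, dist_zero_right,
      (negIso i).norm_map]
  have hres : MeasurePreserving (⇑(negIso i))
      (volume.restrict ((ball (0 : EuclideanSpace ℝ (Fin d)) 1)ᶜ))
      (volume.restrict ((ball (0 : EuclideanSpace ℝ (Fin d)) 1)ᶜ)) := by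
    have h2 := hT.restrict_preimage (measurableSet_ball.compl
      (s := ball (0 : EuclideanSpace ℝ (Fin d)) 1))
    rwa [hpre] at h2
  have hcomp := hres.integral_comp
    ((negIso i).toHomeomorph.measurableEmbedding) (gfun d i α)
  simp_rw [g_neg i α, integral_neg] at hcomp
  linarith

lemma gsq_div (i : Fin d) {α : ℝ} (hα0 : 0 < α) :
    (∫⁻ x in (ball (0 : EuclideanSpace ℝ (Fin d)) 1)ᶜ,
      ENNReal.ofReal ((gfun d i α x) ^ 2 * (1 + ‖x‖) ^ ((d:ℝ) + α))) = ⊤ := by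
  have hsub : (⋃ n, U d i n) ⊆ (ball (0 : EuclideanSpace ℝ (Fin d)) 1)ᶜ :=
    iUnion_subset fun n => U_subset_ball_compl i n
  refine top_le_iff.mp ?_
  calc (⊤:ℝ≥0∞) = ∑' _ : ℕ, c0 d i α :=
        (ENNReal.tsum_const_eq_top_of_ne_zero (c0_ne_zero i α)).symm
    _ ≤ ∑' n : ℕ, ∫⁻ x in U d i n,
          ENNReal.ofReal ((gfun d i α x) ^ 2 * (1 + ‖x‖) ^ ((d:ℝ) + α)) := by
        refine ENNReal.tsum_le_tsum fun n => piece i α _ n fun x hx => ?_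
        exact le_trans (core_lb i hα0 n x hx) (core_le_gsq i hα0 (two_le_of_mem_U hx))
    _ = ∫⁻ x in ⋃ n, U d i n,
          ENNReal.ofReal ((gfun d i α x) ^ 2 * (1 + ‖x‖) ^ ((d:ℝ) + α)) :=
        (lintegral_iUnion (measurableSet_U i) (U_disj i) _).symm
    _ ≤ _ := lintegral_mono_set hsub

lemma gv_nonneg (i : Fin d) (α R : ℝ) (x : EuclideanSpace ℝ (Fin d)) :
    0 ≤ gfun d i α x * vfun d i α R x := by
  unfold gfun vfun
  by_cases h1 : ‖x‖ ≤ 1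
  · simp [h1]
  by_cases h2 : 2 ≤ ‖x‖ ∧ ‖x‖ ≤ R
  · rw [if_neg h1, if_pos h2]
    have hn : (0:ℝ) < ‖x‖ := by push_neg at h1; linarith
    have h3 : (0:ℝ) ≤ (‖x‖ - 1) ^ (3 * α / 4) := Real.rpow_nonneg (by linarith [h2.1]) _
    have h4 : (0:ℝ) ≤ (‖x‖ - 1) ^ (α / 4) := Real.rpow_nonneg (by linarith [h2.1]) _
    have h5 : (0:ℝ) ≤ (1 + ‖x‖) ^ (-(d:ℝ) - α) := Real.rpow_nonneg (by linarith) _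
    have : x i / ‖x‖ * (‖x‖ - 1) ^ (3 * α / 4) * (1 + ‖x‖) ^ (-(d:ℝ) - α) *
        (x i / ‖x‖ * (‖x‖ - 1) ^ (α / 4)) =
        (x i / ‖x‖)^2 * ((‖x‖ - 1) ^ (3 * α / 4) * (‖x‖ - 1) ^ (α / 4) *
          (1 + ‖x‖) ^ (-(d:ℝ) - α)) := by ring
    rw [this]
    positivity
  · simp [h1, h2]

set_option maxHeartbeats 1000000 in
/-- lower bound for the truncated pairing -/
lemma T_lb (i : Fin d) {α : ℝ} (hα0 : 0 < α) (N : ℕ) :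
    (N : ℝ≥0∞) * c0 d i α ≤
      ∫⁻ x in (ball (0 : EuclideanSpace ℝ (Fin d)) 1)ᶜ,
        ENNReal.ofReal (gfun d i α x * vfun d i α ((2:ℝ) ^ ((N:ℝ) + 2)) x) := by
  set R := (2:ℝ) ^ ((N:ℝ) + 2) with hR
  have hsub : (⋃ k : Fin N, U d i (k:ℕ)) ⊆ (ball (0 : EuclideanSpace ℝ (Fin d)) 1)ᶜ :=
    iUnion_subset fun k => U_subset_ball_compl i (k:ℕ)
  have hdisj : Pairwise (Function.onFun Disjoint fun k : Fin N => U d i (k:ℕ)) :=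
    fun a b hab => U_disj i (Fin.val_injective.ne hab)
  calc (N : ℝ≥0∞) * c0 d i α = ∑' _ : Fin N, c0 d i α := by
        rw [tsum_fintype]
        simp [Finset.sum_const, Finset.card_univ, nsmul_eq_mul]
    _ ≤ ∑' k : Fin N, ∫⁻ x in U d i (k:ℕ),
          ENNReal.ofReal (gfun d i α x * vfun d i α R x) := by
        refine ENNReal.tsum_le_tsum fun k => piece i α _ (k:ℕ) fun x hx => ?_
        have hRk : (2:ℝ) ^ (((k:ℕ):ℝ) + 2) ≤ R := by
          apply Real.rpow_le_rpow_of_exponent_le one_le_two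
          have : ((k:ℕ):ℝ) ≤ (N:ℝ) := by exact_mod_cast k.2.le
          linarith
        rw [gv_eq_core i hx hRk]
        exact core_lb i hα0 (k:ℕ) x hx
    _ = ∫⁻ x in ⋃ k : Fin N, U d i (k:ℕ),
          ENNReal.ofReal (gfun d i α x * vfun d i α R x) :=
        (lintegral_iUnion (s := fun k : Fin N => U d i (k:ℕ))
          (fun k => measurableSet_U i (k:ℕ)) hdisj _).symm
    _ ≤ _ := lintegral_mono_set hsub

/-- upper bound : the truncated pairing is finite -/
lemma T_fin (i : Fin d) {α : ℝ} (hα0 : 0 < α) (hα2 : α < 2) (N : ℕ) :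
    (∫⁻ x in (ball (0 : EuclideanSpace ℝ (Fin d)) 1)ᶜ,
      ENNReal.ofReal (gfun d i α x * vfun d i α ((2:ℝ) ^ ((N:ℝ) + 2)) x)) < ⊤ := by
  set R := (2:ℝ) ^ ((N:ℝ) + 2) with hRdef
  have hR1 : (1:ℝ) ≤ R := by
    rw [hRdef, ← Real.rpow_zero (2:ℝ)]
    exact Real.rpow_le_rpow_of_exponent_le one_le_two (by positivity)
  have hvb : ∀ x : EuclideanSpace ℝ (Fin d), |vfun d i α R x| ≤ R ^ (α/4) := by
    intro x
    unfold vfun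
    split_ifs with h
    · obtain ⟨h2, hxR⟩ := h
      have hx0 : (0:ℝ) < ‖x‖ := by linarith
      rw [abs_mul]
      have hq : |x i / ‖x‖| ≤ 1 := by
        rw [abs_div, abs_of_pos hx0, div_le_one hx0]
        exact abs_coord_le i x
      have hb : |(‖x‖ - 1) ^ (α/4)| ≤ R ^ (α/4) := by
        rw [abs_of_nonneg (Real.rpow_nonneg (by linarith) _)]
        exact Real.rpow_le_rpow (by linarith) (by linarith) (by positivity)
      calc |x i / ‖x‖| * |(‖x‖ - 1) ^ (α/4)| ≤ 1 * (R ^ (α/4)) :=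
            mul_le_mul hq hb (abs_nonneg _) one_pos.le
        _ = R ^ (α/4) := one_mul _
    · rw [abs_zero]; positivity
  have hpt : ∀ x : EuclideanSpace ℝ (Fin d),
      ENNReal.ofReal (gfun d i α x * vfun d i α R x) ≤
        ENNReal.ofReal (R ^ (α/4)) * ENNReal.ofReal |gfun d i α x| := by
    intro x
    rw [← ENNReal.ofReal_mul (by positivity)]
    apply ENNReal.ofReal_le_ofReal
    calc gfun d i α x * vfun d i α R x ≤ |gfun d i α x * vfun d i α R x| := le_abs_self _
      _ = |gfun d i α x| * |vfun d i α R x| := abs_mul _ _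
      _ ≤ |gfun d i α x| * R ^ (α/4) := by
          exact mul_le_mul_of_nonneg_left (hvb x) (abs_nonneg _)
      _ = R ^ (α/4) * |gfun d i α x| := mul_comm _ _
  calc (∫⁻ x in (ball (0 : EuclideanSpace ℝ (Fin d)) 1)ᶜ,
        ENNReal.ofReal (gfun d i α x * vfun d i α R x))
      ≤ ∫⁻ x in (ball (0 : EuclideanSpace ℝ (Fin d)) 1)ᶜ,
          ENNReal.ofReal (R ^ (α/4)) * ENNReal.ofReal |gfun d i α x| :=
        lintegral_mono fun x => hpt x
    _ = ENNReal.ofReal (R ^ (α/4)) *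
        ∫⁻ x in (ball (0 : EuclideanSpace ℝ (Fin d)) 1)ᶜ,
          ENNReal.ofReal |gfun d i α x| :=
        lintegral_const_mul _ ((g_meas i α).abs.ennreal_ofReal)
    _ < ⊤ := by
        apply ENNReal.mul_lt_top ENNReal.ofReal_lt_top
        exact ((g_int i hα0 hα2).abs.integrableOn).lintegral_lt_top

def CE (d : ℕ) (α : ℝ) : ℝ≥0∞ :=
  volume (ball (0 : EuclideanSpace ℝ (Fin d)) 1) *
    ∫⁻ y : EuclideanSpace ℝ (Fin d),
      ENNReal.ofReal ((3:ℝ) ^ ((d:ℝ) + α/2) * (1 + ‖y‖) ^ (-((d:ℝ) + α/2)))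

lemma CE_lt_top {α : ℝ} (hα0 : 0 < α) : CE (d := d) α < ⊤ := by
  unfold CE
  apply ENNReal.mul_lt_top measure_ball_lt_top
  have hint : Integrable (fun y : EuclideanSpace ℝ (Fin d) => (1 + ‖y‖) ^ (-((d:ℝ) + α/2))) := by
    apply integrable_one_add_norm
    rw [finrank_euclideanSpace_fin]; linarith
  calc (∫⁻ y : EuclideanSpace ℝ (Fin d),
        ENNReal.ofReal ((3:ℝ) ^ ((d:ℝ) + α/2) * (1 + ‖y‖) ^ (-((d:ℝ) + α/2))))
      = ENNReal.ofReal ((3:ℝ) ^ ((d:ℝ) + α/2)) *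
          ∫⁻ y : EuclideanSpace ℝ (Fin d),
            ENNReal.ofReal ((1 + ‖y‖) ^ (-((d:ℝ) + α/2))) := by
        rw [← lintegral_const_mul (f := fun y : EuclideanSpace ℝ (Fin d) =>
          ENNReal.ofReal ((1 + ‖y‖) ^ (-((d:ℝ) + α/2)))) _ (((measurable_const.add measurable_norm).pow
          measurable_const).ennreal_ofReal)]
        congr 1
        ext y
        rw [← ENNReal.ofReal_mul (by positivity)]
    _ < ⊤ := ENNReal.mul_lt_top ENNReal.ofReal_lt_top hint.lintegral_lt_top

lemma v_memLp (i : Fin d) (α R : ℝ) :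
    MemLp (vfun d i α R) 2
      (volume.restrict (ball (0 : EuclideanSpace ℝ (Fin d)) 1)) := by
  refine MemLp.zero.ae_eq (Filter.eventuallyEq_of_mem
    (self_mem_ae_restrict measurableSet_ball) fun x hx => ?_)
  rw [mem_ball, dist_zero_right] at hx
  show (0:ℝ) = vfun d i α R x
  unfold vfun
  rw [if_neg]
  rintro ⟨h2, -⟩
  linarith

lemma v_energy (i : Fin d) {α : ℝ} (hα0 : 0 < α) (hα2 : α < 2) (R : ℝ) :
    (∫⁻ p in (ball (0 : EuclideanSpace ℝ (Fin d)) 1) ×ˢ univ,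
      ENNReal.ofReal ((vfun d i α R p.1 - vfun d i α R p.2) ^ 2 *
        ‖p.1 - p.2‖ ^ (-(d : ℝ) - α)) ∂(volume.prod volume)) ≤ CE d α := by
  set s : ℝ := (d:ℝ) + α/2 with hs
  have hs0 : (0:ℝ) ≤ s := by
    have : (0:ℝ) ≤ (d:ℝ) := Nat.cast_nonneg d
    rw [hs]; linarith
  have hpt : ∀ p : EuclideanSpace ℝ (Fin d) × EuclideanSpace ℝ (Fin d),
      p ∈ (ball (0 : EuclideanSpace ℝ (Fin d)) 1) ×ˢ (univ : Set (EuclideanSpace ℝ (Fin d))) →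
      ENNReal.ofReal ((vfun d i α R p.1 - vfun d i α R p.2) ^ 2 *
        ‖p.1 - p.2‖ ^ (-(d : ℝ) - α)) ≤
      ENNReal.ofReal ((3:ℝ) ^ s * (1 + ‖p.2‖) ^ (-s)) := by
    rintro ⟨x, y⟩ ⟨hx, -⟩
    rw [mem_ball, dist_zero_right] at hx
    apply ENNReal.ofReal_le_ofReal
    have hvx : vfun d i α R x = 0 := by
      unfold vfun; rw [if_neg]; rintro ⟨h2, -⟩; linarith
    dsimp only
    rw [hvx, zero_sub, neg_sq]
    have hrhs : (0:ℝ) ≤ (3:ℝ) ^ s * (1 + ‖y‖) ^ (-s) := by positivity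
    by_cases hy : 2 ≤ ‖y‖ ∧ ‖y‖ ≤ R
    · have hy1 := hy.1
      have h21 : (1:ℝ) ≤ ‖y‖ - 1 := by linarith
      have hxy : ‖y‖ - 1 ≤ ‖x - y‖ := by
        have h1 : ‖y‖ - ‖x‖ ≤ ‖y - x‖ := norm_sub_norm_le y x
        rw [norm_sub_rev] at h1
        linarith
      have hker : ‖x - y‖ ^ (-(d:ℝ) - α) ≤ (‖y‖ - 1) ^ (-(d:ℝ) - α) := by
        apply Real.rpow_le_rpow_of_nonpos (by linarith) hxy
        have : (0:ℝ) ≤ (d:ℝ) := Nat.cast_nonneg d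
        linarith
      have hv2 : (vfun d i α R y) ^ 2 ≤ (‖y‖ - 1) ^ (α/2) := by
        unfold vfun
        rw [if_pos hy, mul_pow]
        have e1 : ((‖y‖ - 1) ^ (α/4)) ^ (2:ℕ) = (‖y‖ - 1) ^ (α/2) := by
          rw [← Real.rpow_natCast ((‖y‖ - 1) ^ (α/4)) 2, ← Real.rpow_mul (by linarith)]
          congr 1; push_cast; ring
        rw [e1]
        have h1 : (y i / ‖y‖) ^ 2 ≤ 1 := by
          rw [div_pow, div_le_one (by nlinarith)]
          have h2 := abs_coord_le i y
          nlinarith [abs_nonneg (y i), sq_abs (y i)]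
        nlinarith [Real.rpow_nonneg (show (0:ℝ) ≤ ‖y‖ - 1 by linarith) (α/2)]
      have hcomb : (vfun d i α R y) ^ 2 * ‖x - y‖ ^ (-(d:ℝ) - α) ≤
          (‖y‖ - 1) ^ (α/2 + (-(d:ℝ) - α)) := by
        rw [Real.rpow_add (by linarith : (0:ℝ) < ‖y‖ - 1)]
        exact mul_le_mul hv2 hker (Real.rpow_nonneg (norm_nonneg _) _)
          (Real.rpow_nonneg (by linarith) _)
      have hexp : α/2 + (-(d:ℝ) - α) = -s := by rw [hs]; ring
      rw [hexp] at hcomb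
      refine le_trans hcomb ?_
      have h3 : (1 + ‖y‖)/3 ≤ ‖y‖ - 1 := by linarith
      have hmono : (‖y‖ - 1) ^ (-s) ≤ ((1 + ‖y‖)/3) ^ (-s) :=
        Real.rpow_le_rpow_of_nonpos (by positivity) h3 (by linarith)
      refine le_trans hmono (le_of_eq ?_)
      rw [Real.div_rpow (by positivity) (by norm_num : (0:ℝ) ≤ 3),
        Real.rpow_neg (by norm_num : (0:ℝ) ≤ 3), div_eq_mul_inv, inv_inv, mul_comm]
    · have hvy : vfun d i α R y = 0 := by unfold vfun; rw [if_neg hy]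
      rw [hvy]
      simpa using hrhs
  calc (∫⁻ p in (ball (0 : EuclideanSpace ℝ (Fin d)) 1) ×ˢ univ,
        ENNReal.ofReal ((vfun d i α R p.1 - vfun d i α R p.2) ^ 2 *
          ‖p.1 - p.2‖ ^ (-(d : ℝ) - α)) ∂(volume.prod volume))
      ≤ ∫⁻ p in (ball (0 : EuclideanSpace ℝ (Fin d)) 1) ×ˢ univ,
          ENNReal.ofReal ((3:ℝ) ^ s * (1 + ‖p.2‖) ^ (-s)) ∂(volume.prod volume) :=
        setLIntegral_mono' (measurableSet_ball.prod MeasurableSet.univ) hpt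
    _ = CE d α := by
        rw [← Measure.prod_restrict, Measure.restrict_univ,
          lintegral_prod (fun p : EuclideanSpace ℝ (Fin d) × EuclideanSpace ℝ (Fin d) =>
            ENNReal.ofReal ((3:ℝ) ^ s * (1 + ‖p.2‖) ^ (-s))) (((measurable_const.mul ((measurable_const.add
            measurable_snd.norm).pow measurable_const)).ennreal_ofReal).aemeasurable)]
        simp only []
        rw [lintegral_const, Measure.restrict_apply_univ]
        unfold CE
        simp only [hs]
        exact (mul_comm _ _)

end NX

end NXAux

open NX in
/-- non-existence of weak solutions for the fractional Neumann
problem on the unit ball: with `ν(h) = |h|^{−d−α}` and weight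
`ν̃(h) = (1+|h|)^{−d−α}`, there is `g ∈ L¹(B₁^c) \ L²(B₁^c, ν̃⁻¹)` with
`∫_{B₁^c} g = 0` (explicitly `g(x) = (x₁/|x|)(|x|−1)^γ (1+|x|)^{−d−α}` outside
`B₁` for a suitable `γ`) such that the variational Neumann problem `Lu = 0` in
`B₁`, `Nu = g` on `ℝ^d \ B₁` has no weak solution in `V_ν(B₁|ℝ^d)`. -/
theorem neumann_nonexistence_fractional
    (d : ℕ) (hd : 0 < d) (α : ℝ) (hα : α ∈ Set.Ioo (0 : ℝ) 2) :
    ∃ g : EuclideanSpace ℝ (Fin d) → ℝ,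
      (∃ γ : ℝ, ∀ x : EuclideanSpace ℝ (Fin d),
        g x = if ‖x‖ ≤ 1 then 0
          else (x ⟨0, hd⟩ / ‖x‖) * (‖x‖ - 1) ^ γ * (1 + ‖x‖) ^ (-(d : ℝ) - α)) ∧
      IntegrableOn g (ball (0 : EuclideanSpace ℝ (Fin d)) 1)ᶜ ∧
      ¬ (∫⁻ x in (ball (0 : EuclideanSpace ℝ (Fin d)) 1)ᶜ,
          ENNReal.ofReal ((g x) ^ 2 * (1 + ‖x‖) ^ ((d : ℝ) + α)) < ⊤) ∧
      (∫ x in (ball (0 : EuclideanSpace ℝ (Fin d)) 1)ᶜ, g x) = 0 ∧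
      ¬ ∃ u : EuclideanSpace ℝ (Fin d) → ℝ, Measurable u ∧
          MemLp u 2 (volume.restrict (ball (0 : EuclideanSpace ℝ (Fin d)) 1)) ∧
          (∫⁻ p in (ball (0 : EuclideanSpace ℝ (Fin d)) 1) ×ˢ univ,
              ENNReal.ofReal ((u p.1 - u p.2) ^ 2 * ‖p.1 - p.2‖ ^ (-(d : ℝ) - α))
              ∂(volume.prod volume)) < ⊤ ∧
          ∀ v : EuclideanSpace ℝ (Fin d) → ℝ, Measurable v →
            MemLp v 2 (volume.restrict (ball (0 : EuclideanSpace ℝ (Fin d)) 1)) →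
            (∫⁻ p in (ball (0 : EuclideanSpace ℝ (Fin d)) 1) ×ˢ univ,
                ENNReal.ofReal ((v p.1 - v p.2) ^ 2 * ‖p.1 - p.2‖ ^ (-(d : ℝ) - α))
                ∂(volume.prod volume)) < ⊤ →
            (1 / 2) * (∫ p in (((ball (0 : EuclideanSpace ℝ (Fin d)) 1)ᶜ ×ˢ
                  (ball (0 : EuclideanSpace ℝ (Fin d)) 1)ᶜ))ᶜ,
                (u p.1 - u p.2) * (v p.1 - v p.2) * ‖p.1 - p.2‖ ^ (-(d : ℝ) - α)
                ∂(volume.prod volume))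
              = ∫ x in (ball (0 : EuclideanSpace ℝ (Fin d)) 1)ᶜ, g x * v x := by
  obtain ⟨hα0, hα2⟩ := hα
  set i : Fin d := ⟨0, hd⟩
  refine ⟨gfun d i α, ⟨3 * α / 4, fun x => rfl⟩, (g_int i hα0 hα2).integrableOn,
    by rw [gsq_div i hα0]; exact fun h => (lt_irrefl _ h), g_int_zero i α, ?_⟩
  rintro ⟨u, hu_meas, hu_lp, hu_en, hu_weak⟩
  set B := ball (0 : EuclideanSpace ℝ (Fin d)) 1 with hBdef
  set e : ℝ := -(d:ℝ) - α with hedef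
  have hd0 : (0:ℝ) ≤ (d:ℝ) := Nat.cast_nonneg d
  have he_neg : e < 0 := by rw [hedef]; linarith
  set Eu := (∫⁻ p in B ×ˢ univ,
      ENNReal.ofReal ((u p.1 - u p.2) ^ 2 * ‖p.1 - p.2‖ ^ e)
      ∂(volume.prod volume)) with hEudef
  set K := Eu ^ (1/2:ℝ) * (CE d α) ^ (1/2:ℝ) with hKdef
  have hEu_top : Eu ≠ ⊤ := hu_en.ne
  have hK_top : K ≠ ⊤ := ENNReal.mul_ne_top
    (ENNReal.rpow_ne_top_of_nonneg (by norm_num) hEu_top)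
    (ENNReal.rpow_ne_top_of_nonneg (by norm_num) (CE_lt_top hα0).ne)
  obtain ⟨N, hN⟩ := ENNReal.exists_nat_gt
    (ENNReal.div_lt_top hK_top (c0_ne_zero i α)).ne
  have hKN : K < (N:ℝ≥0∞) * c0 d i α := by
    rwa [ENNReal.div_lt_iff (Or.inl (c0_ne_zero i α)) (Or.inl (c0_ne_top i α))] at hN
  set R := (2:ℝ) ^ ((N:ℝ) + 2) with hRdef
  set vN := vfun d i α R with hvNdef
  have hvN_en := v_energy i hα0 hα2 R
  have heq := hu_weak vN (v_meas i α R) (v_memLp i α R)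
    (lt_of_le_of_lt hvN_en (CE_lt_top hα0))
  set T := (∫⁻ x in Bᶜ, ENNReal.ofReal (gfun d i α x * vN x)) with hTdef
  have hT_lb : (N:ℝ≥0∞) * c0 d i α ≤ T := T_lb i hα0 N
  have hT_fin : T < ⊤ := T_fin i hα0 hα2 N
  have hr : (∫ x in Bᶜ, gfun d i α x * vN x) = T.toReal := by
    rw [hTdef]
    rw [integral_eq_lintegral_of_nonneg_ae (ae_of_all _ fun x => gv_nonneg i α R x)
      (((g_meas i α).mul (v_meas i α R)).aestronglyMeasurable)]
  have hofr : ENNReal.ofReal (∫ x in Bᶜ, gfun d i α x * vN x) = T := by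
    rw [hr, ENNReal.ofReal_toReal hT_fin.ne]
  set F := fun p : EuclideanSpace ℝ (Fin d) × EuclideanSpace ℝ (Fin d) =>
    ENNReal.ofReal (|u p.1 - u p.2| * |vN p.1 - vN p.2| * ‖p.1 - p.2‖ ^ e) with hFdef
  have hFmeas : Measurable F := by
    apply Measurable.ennreal_ofReal
    exact ((((hu_meas.comp measurable_fst).sub (hu_meas.comp measurable_snd)).abs.mul
      ((((v_meas i α R).comp measurable_fst).sub
        ((v_meas i α R).comp measurable_snd)).abs)).mul
      ((measurable_fst.sub measurable_snd).norm.pow measurable_const))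
  set A := fun p : EuclideanSpace ℝ (Fin d) × EuclideanSpace ℝ (Fin d) =>
    ENNReal.ofReal (|u p.1 - u p.2| * ‖p.1 - p.2‖ ^ (e/2)) with hAdef
  set Bf := fun p : EuclideanSpace ℝ (Fin d) × EuclideanSpace ℝ (Fin d) =>
    ENNReal.ofReal (|vN p.1 - vN p.2| * ‖p.1 - p.2‖ ^ (e/2)) with hBfdef
  have hAmeas : Measurable A := by
    apply Measurable.ennreal_ofReal
    exact (((hu_meas.comp measurable_fst).sub (hu_meas.comp measurable_snd)).abs.mul
      ((measurable_fst.sub measurable_snd).norm.pow measurable_const))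
  have hBfmeas : Measurable Bf := by
    apply Measurable.ennreal_ofReal
    exact ((((v_meas i α R).comp measurable_fst).sub
      ((v_meas i α R).comp measurable_snd)).abs.mul
      ((measurable_fst.sub measurable_snd).norm.pow measurable_const))
  have hFAB : ∀ p, F p = (A * Bf) p := by
    intro p
    simp only [hFdef, hAdef, hBfdef, Pi.mul_apply]
    rw [← ENNReal.ofReal_mul (by positivity)]
    congr 1
    rcases eq_or_lt_of_le (norm_nonneg (p.1 - p.2)) with h0 | h0
    · rw [← h0, Real.zero_rpow he_neg.ne, Real.zero_rpow (by linarith : e/2 ≠ 0)]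
      ring
    · rw [show |u p.1 - u p.2| * ‖p.1 - p.2‖ ^ (e/2) *
          (|vN p.1 - vN p.2| * ‖p.1 - p.2‖ ^ (e/2)) =
          |u p.1 - u p.2| * |vN p.1 - vN p.2| *
            (‖p.1 - p.2‖ ^ (e/2) * ‖p.1 - p.2‖ ^ (e/2)) by ring,
        ← Real.rpow_add h0, show e/2 + e/2 = e by ring]
  have hpow2 : ∀ x : ℝ≥0∞, x ^ (2:ℝ) = x ^ (2:ℕ) := fun x => by
    rw [← ENNReal.rpow_natCast x 2]; norm_num
  have hsq : ∀ r : ℝ, 0 ≤ r → (r ^ (e/2)) ^ (2:ℕ) = r ^ e := by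
    intro r hr
    rw [← Real.rpow_natCast (r ^ (e/2)) 2, ← Real.rpow_mul hr]
    congr 1
    push_cast; ring
  have hA2 : ∀ p : EuclideanSpace ℝ (Fin d) × EuclideanSpace ℝ (Fin d),
      A p ^ (2:ℝ) = ENNReal.ofReal ((u p.1 - u p.2) ^ 2 * ‖p.1 - p.2‖ ^ e) := by
    intro p
    rw [hAdef, hpow2, ← ENNReal.ofReal_pow (by positivity)]
    congr 1
    rw [mul_pow, sq_abs, hsq _ (norm_nonneg _)]
  have hB2 : ∀ p : EuclideanSpace ℝ (Fin d) × EuclideanSpace ℝ (Fin d),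
      Bf p ^ (2:ℝ) = ENNReal.ofReal ((vN p.1 - vN p.2) ^ 2 * ‖p.1 - p.2‖ ^ e) := by
    intro p
    rw [hBfdef, hpow2, ← ENNReal.ofReal_pow (by positivity)]
    congr 1
    rw [mul_pow, sq_abs, hsq _ (norm_nonneg _)]
  have hCS : (∫⁻ p in B ×ˢ univ, F p ∂(volume.prod volume)) ≤ K := by
    calc (∫⁻ p in B ×ˢ univ, F p ∂(volume.prod volume))
        = ∫⁻ p in B ×ˢ univ, (A * Bf) p ∂(volume.prod volume) := lintegral_congr hFAB
      _ ≤ (∫⁻ p in B ×ˢ univ, A p ^ (2:ℝ) ∂(volume.prod volume)) ^ (1/2:ℝ) *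
          (∫⁻ p in B ×ˢ univ, Bf p ^ (2:ℝ) ∂(volume.prod volume)) ^ (1/2:ℝ) :=
          ENNReal.lintegral_mul_le_Lp_mul_Lq _ Real.HolderConjugate.two_two
            hAmeas.aemeasurable hBfmeas.aemeasurable
      _ ≤ K := by
          rw [hKdef]
          refine mul_le_mul' (ENNReal.rpow_le_rpow ?_ (by norm_num))
            (ENNReal.rpow_le_rpow ?_ (by norm_num))
          · rw [hEudef]
            exact le_of_eq (lintegral_congr hA2)
          · rw [lintegral_congr hB2]
            exact hvN_en
  set Reg := (Bᶜ ×ˢ Bᶜ)ᶜ with hRegdef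
  have hRegsub : Reg ⊆ (B ×ˢ univ) ∪ (univ ×ˢ B) := by
    intro p hp
    rw [hRegdef, mem_compl_iff, mem_prod] at hp
    push_neg at hp
    by_cases h1 : p.1 ∈ B
    · exact Or.inl (mem_prod.mpr ⟨h1, mem_univ _⟩)
    · right
      refine mem_prod.mpr ⟨mem_univ _, ?_⟩
      have h2 := hp (by simpa using h1)
      simpa using h2
  have hswap : (∫⁻ p in univ ×ˢ B, F p ∂(volume.prod volume))
      = ∫⁻ p in B ×ˢ univ, F p ∂(volume.prod volume) := by
    have hFs : ∀ p : EuclideanSpace ℝ (Fin d) × EuclideanSpace ℝ (Fin d),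
        F (Prod.swap p) = F p := by
      intro p
      simp only [hFdef, Prod.fst_swap, Prod.snd_swap]
      rw [abs_sub_comm (u p.2) (u p.1), abs_sub_comm (vN p.2) (vN p.1),
        norm_sub_rev p.2 p.1]
    calc (∫⁻ p in univ ×ˢ B, F p ∂(volume.prod volume))
        = ∫⁻ p, F p ∂((volume.restrict univ).prod (volume.restrict B)) := by
          rw [Measure.prod_restrict]
      _ = ∫⁻ p, F (Prod.swap p) ∂((volume.restrict B).prod (volume.restrict univ)) :=
          ((Measure.measurePreserving_swap).lintegral_comp hFmeas).symm
      _ = ∫⁻ p, F p ∂((volume.restrict B).prod (volume.restrict univ)) :=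
          lintegral_congr hFs
      _ = _ := by rw [Measure.prod_restrict]
  have hup : T ≤ K := by
    rw [← hofr, ← heq]
    set I := ∫ p in Reg, (u p.1 - u p.2) * (vN p.1 - vN p.2) * ‖p.1 - p.2‖ ^ e
      ∂(volume.prod volume) with hIdef
    have habs : ENNReal.ofReal |I| ≤ ∫⁻ p in Reg, F p ∂(volume.prod volume) := by
      rw [← Real.norm_eq_abs, ofReal_norm]
      refine le_trans (enorm_integral_le_lintegral_enorm _)
        (le_of_eq (lintegral_congr fun p => ?_))
      rw [Real.enorm_eq_ofReal_abs, hFdef]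
      congr 1
      rw [abs_mul, abs_mul, abs_of_nonneg (Real.rpow_nonneg (norm_nonneg _) _)]
    have hreg : (∫⁻ p in Reg, F p ∂(volume.prod volume)) ≤
        (∫⁻ p in B ×ˢ univ, F p ∂(volume.prod volume)) +
          ∫⁻ p in univ ×ˢ B, F p ∂(volume.prod volume) :=
      le_trans (lintegral_mono_set hRegsub) (lintegral_union_le _ _ _)
    calc ENNReal.ofReal (1/2 * I)
        ≤ ENNReal.ofReal (1/2 * |I|) := ENNReal.ofReal_le_ofReal (by
            have h := le_abs_self I; linarith)
      _ = ENNReal.ofReal (1/2) * ENNReal.ofReal |I| := ENNReal.ofReal_mul (by norm_num)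
      _ ≤ ENNReal.ofReal (1/2) *
          ((∫⁻ p in B ×ˢ univ, F p ∂(volume.prod volume)) +
            ∫⁻ p in univ ×ˢ B, F p ∂(volume.prod volume)) :=
          mul_le_mul_right (le_trans habs hreg) _
      _ = ENNReal.ofReal (1/2) *
          (2 * (∫⁻ p in B ×ˢ univ, F p ∂(volume.prod volume))) := by
          rw [hswap, two_mul]
      _ = ∫⁻ p in B ×ˢ univ, F p ∂(volume.prod volume) := by
          rw [← mul_assoc,
            show ENNReal.ofReal (1/2) * 2 = 1 by
              rw [show (2:ℝ≥0∞) = ENNReal.ofReal (2:ℝ) by norm_num,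
                ← ENNReal.ofReal_mul (by norm_num)]
              norm_num,
            one_mul]
      _ ≤ K := hCS
  exact absurd hT_lb (not_le.mpr (lt_of_le_of_lt hup hKN))
end
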